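/- arXiv:0808.2977 — 2 statements merged into one kernel-verified Lean document; each statement's English description precedes it below -/
import Mathlib

section
/- For every integer N ≥ 2, the matrix A has exactly the eigenvalues k(k−1) for k = 2, 3, …, N; that is, the characteristic polynomial of A is ∏_{k=2}^{N} (λ − k(k−1)), and in particular A has N−1 distinct simple real eigenvalues 2, 6, 12, …, N(N−1). -/
noncomputable section

open Polynomial Matrix

/-- The (N−1)×(N−1) matrix A (with 1-based index jᵥ = j+1):
A_{i,j} = 2jᵥ(N−jᵥ) if i = j, −jᵥ(N−jᵥ) if |i−j| = 1, 0 otherwise. -/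
def matA (N : ℕ) : Matrix (Fin (N - 1)) (Fin (N - 1)) ℝ :=
  Matrix.of fun i j =>
    if i = j then 2 * (((j : ℕ) + 1 : ℝ) * ((N : ℝ) - ((j : ℕ) + 1)))
    else if (i : ℕ) + 1 = (j : ℕ) ∨ (j : ℕ) + 1 = (i : ℕ) then
      -(((j : ℕ) + 1 : ℝ) * ((N : ℝ) - ((j : ℕ) + 1)))
    else 0


def gp (N k : ℕ) : Polynomial ℝ :=
  ((X + 1) ^ (k + 2) + (X - 1) ^ (k + 2) - C 2 * X ^ (k + 2))
    - C (N : ℝ) * ((X + 1) ^ (k + 1) + (X - 1) ^ (k + 1) - C 2 * X ^ (k + 1))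

lemma coeff_X_sub_one_pow' (n k : ℕ) :
    (((X : ℝ[X]) - 1) ^ n).coeff k = (-1 : ℝ) ^ (n - k) * (n.choose k : ℝ) := by
  have : ((X : ℝ[X]) - 1) = X + C (-1) := by simp [sub_eq_add_neg]
  rw [this, coeff_X_add_C_pow]

lemma gp_coeff (N k l : ℕ) : (gp N k).coeff l =
    (((k+2).choose l : ℝ) * (1 + (-1 : ℝ)^(k+2-l)) - (if l = k+2 then 2 else 0))
      - (N : ℝ) * ((((k+1).choose l : ℝ)) * (1 + (-1 : ℝ)^(k+1-l)) - (if l = k+1 then 2 else 0)) := by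
  simp only [gp, coeff_sub, coeff_add, coeff_C_mul, coeff_X_add_one_pow, coeff_X_sub_one_pow',
    coeff_X_pow]
  split_ifs <;> ring

lemma gp_coeff_hi (N k l : ℕ) (h : k < l) : (gp N k).coeff l = 0 := by
  rw [gp_coeff]
  rcases eq_or_lt_of_le (Nat.succ_le_of_lt h) with h1 | h1
  · -- l = k+1
    rw [← h1]
    simp only [Nat.succ_eq_add_one]
    rw [show k + 2 - (k+1) = 1 by omega, show k + 1 - (k+1) = 0 by omega]
    norm_num [show ¬ (k+1 = k+2) by omega]
  rcases eq_or_lt_of_le (Nat.succ_le_of_lt h1) with h2 | h2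
  · -- l = k+2
    rw [← h2]
    simp only [Nat.succ_eq_add_one]
    norm_num [show k + 2 - (k+1+1) = 0 by omega, show k+1+1 = k+2 by omega,
      show k + 1 - (k+2) = 0 by omega, Nat.choose_eq_zero_of_lt (show k+1 < k+2 by omega),
      show ¬ (k+2 = k+1) by omega]
  · rw [Nat.choose_eq_zero_of_lt (by omega), Nat.choose_eq_zero_of_lt (by omega)]
    simp [show ¬ l = k + 2 by omega, show ¬ l = k + 1 by omega]

lemma gp_natDegree_le (N k : ℕ) : (gp N k).natDegree ≤ k :=
  Polynomial.natDegree_le_iff_coeff_eq_zero.2 fun l hl => gp_coeff_hi N k l hl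

lemma gp_coeff_diag (N k : ℕ) : (gp N k).coeff k = ((k : ℝ) + 2) * ((k : ℝ) + 1) := by
  rw [gp_coeff]
  rw [show k + 2 - k = 2 by omega, show k + 1 - k = 1 by omega]
  have hc : (k+2).choose k = ((k+2)*(k+1))/2 := by
    have h1 : (k+2).choose k = (k+2).choose 2 := by
      rw [← Nat.choose_symm (by omega : 2 ≤ k+2), show k+2-2 = k by omega]
    rw [h1, Nat.choose_two_right, show k+2-1 = k+1 by omega]
  rw [hc]
  have he : 2 ∣ ((k+2)*(k+1)) := by
    rw [mul_comm]; exact (Nat.even_mul_succ_self (k+1)).two_dvd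
  have : (((k+2)*(k+1)/2 : ℕ) : ℝ) = ((k:ℝ)+2)*((k:ℝ)+1)/2 := by
    rw [Nat.cast_div he (by norm_num)]
    push_cast; ring
  rw [this]
  simp [show ¬ k = k + 2 by omega, show ¬ k = k + 1 by omega]
  ring

lemma gp_eval (N k : ℕ) (x : ℝ) : (gp N k).eval x =
    2 * (x * ((N:ℝ) - x)) * x ^ k - ((x-1) * ((N:ℝ) - (x-1))) * (x-1) ^ k
      - ((x+1) * ((N:ℝ) - (x+1))) * (x+1) ^ k := by
  simp only [gp, eval_sub, eval_add, eval_mul, eval_pow, eval_X, eval_one, eval_C]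
  ring

lemma sum_ite_coe {n : ℕ} (g : Fin n → ℝ) (m : ℕ) :
    (∑ i : Fin n, if (i : ℕ) = m then g i else 0) = if h : m < n then g ⟨m, h⟩ else 0 := by
  split_ifs with h
  · rw [show (∑ i : Fin n, if (i : ℕ) = m then g i else 0)
        = ∑ i : Fin n, if i = ⟨m, h⟩ then g i else 0 from
      Finset.sum_congr rfl fun i _ => by
        by_cases hi : (i : ℕ) = m <;> simp [hi, Fin.ext_iff]]
    rw [Finset.sum_ite_eq']
    simp
  · apply Finset.sum_eq_zero
    intro i _
    have : (i : ℕ) ≠ m := by have := i.isLt; omega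
    simp [this]

lemma sum_ite_succ_coe {n : ℕ} (g : Fin n → ℝ) (m : ℕ) :
    (∑ i : Fin n, if (i : ℕ) + 1 = m then g i else 0)
      = if h : m - 1 < n ∧ 1 ≤ m then g ⟨m - 1, h.1⟩ else 0 := by
  split_ifs with h
  · rw [show (∑ i : Fin n, if (i : ℕ) + 1 = m then g i else 0)
        = ∑ i : Fin n, if (i : ℕ) = m - 1 then g i else 0 from
      Finset.sum_congr rfl fun i _ => by
        by_cases hi : (i : ℕ) + 1 = m <;> simp [hi, show ((i:ℕ) = m - 1) ↔ ((i:ℕ)+1 = m) by omega]]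
    rw [sum_ite_coe]
    simp [h.1]
  · apply Finset.sum_eq_zero
    intro i _
    have : (i : ℕ) + 1 ≠ m := by have := i.isLt; omega
    simp [this]

lemma charpoly_transpose' {n : Type*} [DecidableEq n] [Fintype n]
    (M : Matrix n n ℝ) : Mᵀ.charpoly = M.charpoly := by
  have h : charmatrix Mᵀ = (charmatrix M)ᵀ := by
    apply Matrix.ext
    intro i j
    by_cases h : i = j
    · subst h; simp [charmatrix_apply]
    · simp [Matrix.transpose_apply, charmatrix_apply_ne _ _ _ h,
        charmatrix_apply_ne _ _ _ (Ne.symm h)]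
  rw [Matrix.charpoly, h, Matrix.det_transpose, Matrix.charpoly]

lemma charpoly_similar' {n : Type*} [DecidableEq n] [Fintype n]
    (P M : Matrix n n ℝ) (hP : IsUnit P.det) :
    (P * M * P⁻¹).charpoly = M.charpoly := by
  have h1 : P * P⁻¹ = 1 := Matrix.mul_nonsing_inv P hP
  have h2 : (P.map (C : ℝ →+* ℝ[X])) * (P⁻¹.map C) = 1 := by
    rw [← Matrix.map_mul, h1, Matrix.map_one _ (map_zero C) (map_one C)]
  have h3 : charmatrix (P * M * P⁻¹) = P.map C * charmatrix M * P⁻¹.map C := by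
    unfold charmatrix
    rw [RingHom.mapMatrix_apply, RingHom.mapMatrix_apply, Matrix.map_mul, Matrix.map_mul,
      mul_sub, sub_mul]
    congr 1
    have hs : (Matrix.scalar n (X : ℝ[X])) = (X : ℝ[X]) • (1 : Matrix n n ℝ[X]) := by
      rw [Matrix.scalar_apply, Matrix.smul_one_eq_diagonal]
    rw [hs, Matrix.mul_smul, mul_one, Matrix.smul_mul, h2]
  rw [Matrix.charpoly, Matrix.charpoly, h3, Matrix.det_mul, Matrix.det_mul]
  have h4 : (P.map (C : ℝ →+* ℝ[X])).det * (P⁻¹.map C).det = 1 := by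
    rw [← Matrix.det_mul, h2, Matrix.det_one]
  calc (P.map (C : ℝ →+* ℝ[X])).det * (charmatrix M).det * (P⁻¹.map C).det
      = ((P.map (C : ℝ →+* ℝ[X])).det * (P⁻¹.map C).det) * (charmatrix M).det := by ring
    _ = (charmatrix M).det := by rw [h4, one_mul]
def Pm (N : ℕ) : Matrix (Fin (N-1)) (Fin (N-1)) ℝ :=
  Matrix.of fun j k =>
    ((((j:ℕ)+1 : ℝ)) * ((N:ℝ) - ((j:ℕ)+1))) * (((j:ℕ)+1 : ℝ))^(k:ℕ)

def Um (N : ℕ) : Matrix (Fin (N-1)) (Fin (N-1)) ℝ :=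
  Matrix.of fun l k => (gp N (k:ℕ)).coeff (l:ℕ)

lemma key (N : ℕ) (hN : 2 ≤ N) : (matA N)ᵀ * Pm N = Pm N * Um N := by
  ext j k
  have hn : (j:ℕ) < N - 1 := j.isLt
  have hkn : (k:ℕ) < N - 1 := k.isLt
  obtain ⟨Q, hQdef⟩ : ∃ Q : ℝ → ℝ, Q = fun y => (y * ((N:ℝ) - y)) * y ^ (k:ℕ) := ⟨_, rfl⟩
  have hQ : ∀ y : ℝ, Q y = (y * ((N:ℝ) - y)) * y ^ (k:ℕ) := fun y => by rw [hQdef]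
  obtain ⟨x, hx⟩ : ∃ x : ℝ, x = (((j:ℕ):ℝ)+1) := ⟨_, rfl⟩
  have hPm : ∀ i : Fin (N-1), Pm N i k = Q (((i:ℕ):ℝ)+1) := by
    intro i; rw [hQ]; rfl
  have hRHS : (Pm N * Um N) j k = (x * ((N:ℝ) - x)) * (gp N (k:ℕ)).eval x := by
    rw [Matrix.mul_apply]
    have hterm : ∀ l : Fin (N-1), Pm N j l * Um N l k
        = (x * ((N:ℝ) - x)) * ((gp N (k:ℕ)).coeff (l:ℕ) * x ^ (l:ℕ)) := by
      intro l
      show ((((j:ℕ):ℝ)+1) * ((N:ℝ) - (((j:ℕ):ℝ)+1))) * ((((j:ℕ):ℝ)+1))^(l:ℕ)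
            * (gp N (k:ℕ)).coeff (l:ℕ) = _
      rw [← hx]; ring
    rw [Finset.sum_congr rfl fun l _ => hterm l, ← Finset.mul_sum]
    congr 1
    rw [Polynomial.eval_eq_sum_range' (lt_of_le_of_lt (gp_natDegree_le N (k:ℕ)) hkn)]
    rw [Fin.sum_univ_eq_sum_range (fun l => (gp N (k:ℕ)).coeff l * x ^ l)]
  have hLHS : ((matA N)ᵀ * Pm N) j k
      = (∑ i : Fin (N-1), if (i:ℕ) = (j:ℕ) then 2 * (x * ((N:ℝ) - x)) * Q (((i:ℕ):ℝ)+1) else 0)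
      + (∑ i : Fin (N-1), if (i:ℕ) + 1 = (j:ℕ) then -(x * ((N:ℝ) - x)) * Q (((i:ℕ):ℝ)+1) else 0)
      + (∑ i : Fin (N-1), if (i:ℕ) = (j:ℕ) + 1 then -(x * ((N:ℝ) - x)) * Q (((i:ℕ):ℝ)+1) else 0) := by
    rw [Matrix.mul_apply, ← Finset.sum_add_distrib, ← Finset.sum_add_distrib]
    apply Finset.sum_congr rfl
    intro i _
    rw [Matrix.transpose_apply, hPm i]
    show (if i = j then 2 * ((((j:ℕ):ℝ)+1) * ((N:ℝ) - (((j:ℕ):ℝ)+1)))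
        else if (i : ℕ) + 1 = (j : ℕ) ∨ (j : ℕ) + 1 = (i : ℕ) then
          -((((j:ℕ):ℝ)+1) * ((N:ℝ) - (((j:ℕ):ℝ)+1)))
        else 0) * Q (((i:ℕ):ℝ)+1) = _
    rw [← hx]
    by_cases h1 : (i:ℕ) = (j:ℕ)
    · rw [if_pos (Fin.ext h1 : i = j), if_pos h1,
        if_neg (show ¬ ((i:ℕ) + 1 = (j:ℕ)) by omega),
        if_neg (show ¬ ((i:ℕ) = (j:ℕ) + 1) by omega)]
      ring
    · rw [if_neg (fun h => h1 (congrArg Fin.val h)), if_neg h1]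
      by_cases h2 : (i:ℕ) + 1 = (j:ℕ)
      · rw [if_pos (Or.inl h2), if_pos h2,
          if_neg (show ¬ ((i:ℕ) = (j:ℕ) + 1) by omega)]
        ring
      · rw [if_neg h2]
        by_cases h3 : (j:ℕ) + 1 = (i:ℕ)
        · rw [if_pos (Or.inr h3), if_pos (show (i:ℕ) = (j:ℕ) + 1 by omega)]
          ring
        · rw [if_neg (show ¬ ((i:ℕ) + 1 = (j:ℕ) ∨ (j:ℕ) + 1 = (i:ℕ)) by tauto),
            if_neg (show ¬ ((i:ℕ) = (j:ℕ) + 1) by omega)]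
          ring
  rw [hLHS, hRHS, sum_ite_coe, sum_ite_succ_coe, sum_ite_coe, gp_eval, dif_pos hn]
  have hgoal : (x * ((N:ℝ) - x)) *
      (2 * (x * ((N:ℝ) - x)) * x ^ (k:ℕ) - ((x-1) * ((N:ℝ) - (x-1))) * (x-1) ^ (k:ℕ)
        - ((x+1) * ((N:ℝ) - (x+1))) * (x+1) ^ (k:ℕ))
      = (x * ((N:ℝ) - x)) * (2 * Q x - Q (x-1) - Q (x+1)) := by
    rw [hQ, hQ, hQ]; ring
  rw [hgoal, ← hx]
  have hQ0 : Q 0 = 0 := by rw [hQ]; ring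
  have hQN : Q (N:ℝ) = 0 := by rw [hQ]; ring
  have hc2 : ((((j:ℕ)+1 : ℕ):ℝ)+1) = x + 1 := by rw [hx]; push_cast; ring
  by_cases hj1 : 1 ≤ (j:ℕ)
  · have hc1 : ((((j:ℕ) - 1 : ℕ):ℝ)+1) = x - 1 := by
      rw [Nat.cast_sub hj1, hx]; push_cast; ring
    rw [dif_pos (⟨by omega, hj1⟩ : (j:ℕ) - 1 < N - 1 ∧ 1 ≤ (j:ℕ))]
    rw [hc1]
    by_cases hj2 : (j:ℕ) + 1 < N - 1
    · rw [dif_pos hj2, hc2]; ring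
    · rw [dif_neg hj2]
      have hjN : (j:ℕ) = N - 2 := by omega
      have hxN : x + 1 = (N:ℝ) := by
        rw [hx, hjN, Nat.cast_sub hN]; push_cast; ring
      have hq : Q (x+1) = 0 := by rw [hxN]; exact hQN
      rw [hq]; ring
  · rw [dif_neg (by omega : ¬ ((j:ℕ) - 1 < N - 1 ∧ 1 ≤ (j:ℕ)))]
    have hxm : x - 1 = 0 := by
      rw [hx, (by omega : (j:ℕ) = 0)]; norm_num
    have hQm : Q (x-1) = 0 := by rw [hxm]; exact hQ0
    rw [hQm]
    by_cases hj2 : (j:ℕ) + 1 < N - 1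
    · rw [dif_pos hj2, hc2]; ring
    · rw [dif_neg hj2]
      have hjN : (j:ℕ) = N - 2 := by omega
      have hxN : x + 1 = (N:ℝ) := by
        rw [hx, hjN, Nat.cast_sub hN]; push_cast; ring
      have hq : Q (x+1) = 0 := by rw [hxN]; exact hQN
      rw [hq]; ring

lemma Pm_det_isUnit (N : ℕ) (hN : 2 ≤ N) : IsUnit (Pm N).det := by
  have hfac : Pm N = Matrix.diagonal (fun j : Fin (N-1) =>
        ((((j:ℕ):ℝ)+1) * ((N:ℝ) - (((j:ℕ):ℝ)+1))))
      * Matrix.vandermonde (fun j : Fin (N-1) => (((j:ℕ):ℝ)+1)) := by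
    apply Matrix.ext
    intro j k
    rw [Matrix.diagonal_mul, Matrix.vandermonde]
    rfl
  rw [hfac, Matrix.det_mul, Matrix.det_diagonal, Matrix.det_vandermonde]
  apply IsUnit.mul
  · rw [isUnit_iff_ne_zero]
    apply Finset.prod_ne_zero_iff.2
    intro j _
    have h1 : (0:ℝ) < ((j:ℕ):ℝ)+1 := by positivity
    have h2 : ((j:ℕ):ℝ)+1 < (N:ℝ) := by
      have h3 : (j:ℕ) + 1 < N := by have := j.isLt; omega
      exact_mod_cast h3
    have : (0:ℝ) < (N:ℝ) - (((j:ℕ):ℝ)+1) := by linarith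
    positivity
  · rw [isUnit_iff_ne_zero]
    apply Finset.prod_ne_zero_iff.2
    intro i _
    apply Finset.prod_ne_zero_iff.2
    intro j hj
    have hij0 : i < j := Finset.mem_Ioi.1 hj
    have hij : (i:ℕ) < (j:ℕ) := hij0
    have : ((i:ℕ):ℝ) < ((j:ℕ):ℝ) := by exact_mod_cast hij
    intro hc
    have : ((j:ℕ):ℝ) = ((i:ℕ):ℝ) := by linarith [sub_eq_zero.1 hc]
    linarith

lemma Um_blockTriangular (N : ℕ) : (Um N).BlockTriangular id := by
  intro i j hij
  exact gp_coeff_hi N (j:ℕ) (i:ℕ) hij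

/-- **Eigenvalues of A.** For every N ≥ 2, the characteristic polynomial of A is
∏_{k=2}^{N} (λ − k(k−1)); in particular A has N−1 distinct simple real eigenvalues
2, 6, 12, …, N(N−1) (the values k(k−1) being pairwise distinct for k = 2, …, N). -/
theorem matA_charpoly (N : ℕ) (hN : 2 ≤ N) :
    (matA N).charpoly
      = ∏ k ∈ Finset.Icc 2 N, (Polynomial.X - Polynomial.C ((k : ℝ) * ((k : ℝ) - 1))) ∧
    ∀ k ∈ Finset.Icc 2 N, ∀ l ∈ Finset.Icc 2 N,
      (k : ℝ) * ((k : ℝ) - 1) = (l : ℝ) * ((l : ℝ) - 1) → k = l := by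
  constructor
  · have hP := Pm_det_isUnit N hN
    have hAT : (matA N)ᵀ = Pm N * Um N * (Pm N)⁻¹ := by
      rw [← key N hN, Matrix.mul_assoc, Matrix.mul_nonsing_inv _ hP, Matrix.mul_one]
    have h1 : (matA N).charpoly = (Um N).charpoly := by
      rw [← charpoly_transpose' (matA N), hAT, charpoly_similar' _ _ hP]
    rw [h1, Matrix.charpoly_of_upperTriangular _ (Um_blockTriangular N)]
    have hdiag : ∀ i : Fin (N-1), Um N i i = (((i:ℕ):ℝ) + 2) * (((i:ℕ):ℝ) + 1) :=
      fun i => gp_coeff_diag N (i:ℕ)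
    calc (∏ i : Fin (N-1), (X - C (Um N i i)))
        = ∏ i : Fin (N-1), (X - C ((((i:ℕ):ℝ) + 2) * (((i:ℕ):ℝ) + 1))) := by
          apply Finset.prod_congr rfl; intro i _; rw [hdiag i]
      _ = ∏ i ∈ Finset.range (N-1), (X - C (((i:ℝ) + 2) * ((i:ℝ) + 1))) := by
          rw [Fin.prod_univ_eq_prod_range (fun i => (X - C (((i:ℝ) + 2) * ((i:ℝ) + 1))))]
      _ = ∏ k ∈ Finset.Icc 2 N, (X - C ((k : ℝ) * ((k : ℝ) - 1))) := by
          apply Finset.prod_nbij' (fun i => i + 2) (fun k => k - 2)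
          · intro i hi
            simp only [Finset.mem_range] at hi
            simp only [Finset.mem_Icc]
            omega
          · intro k hk
            simp only [Finset.mem_Icc] at hk
            simp only [Finset.mem_range]
            omega
          · intro i hi; omega
          · intro k hk
            simp only [Finset.mem_Icc] at hk
            omega
          · intro i hi
            congr 1
            push_cast
            ring_nf
  · intro k hk l hl h
    simp only [Finset.mem_Icc] at hk hl
    rcases Nat.lt_trichotomy k l with hlt | he | hlt
    · exfalso
      have h1 : (k:ℝ) + 1 ≤ (l:ℝ) := by exact_mod_cast hlt
      have h2 : (2:ℝ) ≤ (k:ℝ) := by exact_mod_cast hk.1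
      nlinarith
    · exact he
    · exfalso
      have h1 : (l:ℝ) + 1 ≤ (k:ℝ) := by exact_mod_cast hlt
      have h2 : (2:ℝ) ≤ (l:ℝ) := by exact_mod_cast hl.1
      nlinarith
end
end

section
/- Fix an integer N ≥ 2 and r_h > 0. Suppose m̂ ∈ C¹([r_h, ∞)) and ω_j ∈ C¹([r_h, ∞)) ∩ C²((r_h, ∞)) for j = 1, …, N−1 satisfy, for all r > r_h, the zero-cosmological-length-limit black hole equations: m̂′(r) = (r² − 2m̂(r)/r) · Σ_{j=1}^{N−1} (ω_j′(r))² and, for each j, r²(r² − 2m̂(r)/r)·ω_j″(r) + (2m̂(r) + 2r³)·ω_j′(r) = 0, together with the horizon condition m̂(r_h) = r_h³/2 (so that μ̂(r_h) = 0, where μ̂(r) = r² − 2m̂(r)/r) and μ̂(r) > 0 for all r > r_h. Then the solution is unique and trivial: m̂(r) = r_h³/2 for all r ≥ r_h, and every ω_j is constant on [r_h, ∞). -/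
open Filter Topology

private lemma const_of_deriv_zero' {rh : ℝ} {f : ℝ → ℝ}
    (hc : ContinuousOn f (Set.Ici rh))
    (hd : ∀ r ∈ Set.Ioi rh, HasDerivAt f 0 r) :
    ∀ r, rh ≤ r → f r = f rh := by
  intro r hr
  rcases eq_or_lt_of_le hr with h | h
  · rw [← h]
  have key : ∀ a ∈ Set.Ioc rh r, f r = f a := by
    intro a ha
    exact constant_of_has_deriv_right_zero
      (hc.mono (fun x hx => le_trans ha.1.le hx.1))
      (fun x hx => ((hd x (lt_of_lt_of_le ha.1 hx.1)).hasDerivWithinAt))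
      r ⟨ha.2, le_rfl⟩
  have h1 : Tendsto f (𝓝[>] rh) (𝓝 (f rh)) :=
    (hc.continuousWithinAt Set.self_mem_Ici).mono Set.Ioi_subset_Ici_self
  have h2 : Tendsto f (𝓝[>] rh) (𝓝 (f r)) := by
    refine Tendsto.congr' ?_ (tendsto_const_nhds (x := f r))
    filter_upwards [Ioc_mem_nhdsGT_of_mem (Set.mem_Ico.mpr ⟨le_rfl, h⟩)] with a ha
    exact key a ha
  exact tendsto_nhds_unique h2 h1

/-- **Triviality of the ℓ → 0 limit black hole equations.** Fix N ≥ 2 and r_h > 0.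
If m̂ ∈ C¹([r_h,∞)) and ω_j ∈ C¹([r_h,∞)) ∩ C²((r_h,∞)) satisfy, for all r > r_h,
m̂′ = (r² − 2m̂/r)·Σ_j(ω_j′)² and r²(r² − 2m̂/r)ω_j″ + (2m̂ + 2r³)ω_j′ = 0, together
with the horizon condition m̂(r_h) = r_h³/2 (so μ̂(r_h) = 0, μ̂(r) = r² − 2m̂(r)/r) and
μ̂ > 0 on (r_h, ∞), then m̂ ≡ r_h³/2 and every ω_j is constant on [r_h, ∞). -/
theorem limit_black_hole_equations_trivial (N : ℕ) (hN : 2 ≤ N)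
    (rh : ℝ) (hrh : 0 < rh)
    (mh : ℝ → ℝ) (ω : ℕ → ℝ → ℝ)
    (hmC1 : ContDiffOn ℝ 1 mh (Set.Ici rh))
    (hωC1 : ∀ j ∈ Finset.Icc 1 (N - 1), ContDiffOn ℝ 1 (ω j) (Set.Ici rh))
    (hωC2 : ∀ j ∈ Finset.Icc 1 (N - 1), ContDiffOn ℝ 2 (ω j) (Set.Ioi rh))
    (heqm : ∀ r : ℝ, rh < r →
      HasDerivAt mh
        ((r ^ 2 - 2 * mh r / r) * ∑ j ∈ Finset.Icc 1 (N - 1), deriv (ω j) r ^ 2) r)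
    (heqω : ∀ r : ℝ, rh < r → ∀ j ∈ Finset.Icc 1 (N - 1),
      r ^ 2 * (r ^ 2 - 2 * mh r / r) * deriv (deriv (ω j)) r
        + (2 * mh r + 2 * r ^ 3) * deriv (ω j) r = 0)
    (hhor : mh rh = rh ^ 3 / 2)
    (hμ : ∀ r : ℝ, rh < r → 0 < r ^ 2 - 2 * mh r / r) :
    ∀ r : ℝ, rh ≤ r →
      mh r = rh ^ 3 / 2 ∧ ∀ j ∈ Finset.Icc 1 (N - 1), ω j r = ω j rh := by
  -- positivity of radii
  have hrpos : ∀ r : ℝ, rh < r → (0:ℝ) < r := fun r hr => hrh.trans hr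
  -- m̂ is monotone on [rh, ∞)
  have hmono : MonotoneOn mh (Set.Ici rh) := by
    apply monotoneOn_of_deriv_nonneg (convex_Ici rh) hmC1.continuousOn
    · rw [interior_Ici]
      exact fun x hx => (heqm x hx).differentiableAt.differentiableWithinAt
    · rw [interior_Ici]
      intro x hx
      rw [(heqm x hx).deriv]
      exact mul_nonneg (hμ x hx).le (Finset.sum_nonneg fun j _ => sq_nonneg _)
  have hmlb : ∀ r, rh ≤ r → rh ^ 3 / 2 ≤ mh r := by
    intro r hr
    rw [← hhor]
    exact hmono Set.self_mem_Ici hr hr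
  have hmlb' : ∀ r, rh < r → 0 < mh r := fun r hr =>
    lt_of_lt_of_le (by positivity) (hmlb r hr.le)
  -- key step: all derivatives of ω j vanish on (rh, ∞)
  have huzero : ∀ j ∈ Finset.Icc 1 (N - 1), ∀ r, rh < r → deriv (ω j) r = 0 := by
    intro j hj
    set u : ℝ → ℝ := deriv (ω j) with hu
    set μf : ℝ → ℝ := fun r => r ^ 2 - 2 * mh r / r with hμf
    set φ : ℝ → ℝ := fun r => u r ^ 2 * μf r with hφ
    have hC1u : ContDiffOn ℝ 1 u (Set.Ioi rh) :=
      (hωC2 j hj).deriv_of_isOpen isOpen_Ioi (by norm_num)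
    have hudiff : ∀ r ∈ Set.Ioi rh, DifferentiableAt ℝ u r := by
      intro r hr
      exact (hC1u.differentiableOn one_ne_zero).differentiableAt (Ioi_mem_nhds hr)
    -- derivative of μf
    have hμf' : ∀ r ∈ Set.Ioi rh, HasDerivAt μf
        (2 * r - (2 * deriv mh r * r - 2 * mh r * 1) / r ^ 2) r := by
      intro r hr
      have hr0 : (0:ℝ) < r := hrpos r hr
      have h1 : HasDerivAt (fun x : ℝ => x ^ 2) (2 * r) r := by
        simpa using hasDerivAt_pow 2 r
      have hm : HasDerivAt mh (deriv mh r) r := (heqm r hr).differentiableAt.hasDerivAt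
      have h2 : HasDerivAt (fun x : ℝ => 2 * mh x / x)
          ((2 * deriv mh r * r - 2 * mh r * 1) / r ^ 2) r :=
        (hm.const_mul 2).div (hasDerivAt_id r) hr0.ne'
      exact h1.sub h2
    -- derivative of φ and its sign
    have hφder : ∀ r ∈ Set.Ioi rh, HasDerivAt φ
        (2 * u r * deriv u r * μf r
          + u r ^ 2 * (2 * r - (2 * deriv mh r * r - 2 * mh r * 1) / r ^ 2)) r := by
      intro r hr
      have hu' : HasDerivAt u (deriv u r) r := (hudiff r hr).hasDerivAt
      have := ((hu'.pow 2).mul (hμf' r hr))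
      convert this using 1
      · rfl
      · rfl
      · rfl
      · norm_num only [Pi.pow_apply]
        ring
    have hφ'le : ∀ r ∈ Set.Ioi rh,
        2 * u r * deriv u r * μf r
          + u r ^ 2 * (2 * r - (2 * deriv mh r * r - 2 * mh r * 1) / r ^ 2) ≤ 0 := by
      intro r hr
      have hr0 : (0:ℝ) < r := hrpos r hr
      have hr2 : (0:ℝ) < r ^ 2 := by positivity
      have hode : r ^ 2 * μf r * deriv u r + (2 * mh r + 2 * r ^ 3) * u r = 0 :=
        heqω r hr j hj
      have hd0 : 0 ≤ deriv mh r := by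
        rw [(heqm r hr).deriv]
        exact mul_nonneg (hμ r hr).le (Finset.sum_nonneg fun j _ => sq_nonneg _)
      have hmpos : 0 < mh r := hmlb' r hr
      have key : (2 * u r * deriv u r * μf r
          + u r ^ 2 * (2 * r - (2 * deriv mh r * r - 2 * mh r * 1) / r ^ 2)) * r ^ 2
          = 2 * u r * (r ^ 2 * μf r * deriv u r)
            + u r ^ 2 * (2 * r ^ 3 - 2 * deriv mh r * r + 2 * mh r) := by
        field_simp
        ring
      have hcross : 2 * u r * (r ^ 2 * μf r * deriv u r)
          = -2 * (2 * mh r + 2 * r ^ 3) * u r ^ 2 := by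
        have : r ^ 2 * μf r * deriv u r = -((2 * mh r + 2 * r ^ 3) * u r) := by
          linarith [hode]
        rw [this]; ring
      have hfinal : (2 * u r * deriv u r * μf r
          + u r ^ 2 * (2 * r - (2 * deriv mh r * r - 2 * mh r * 1) / r ^ 2)) * r ^ 2 ≤ 0 := by
        rw [key, hcross]
        have h1 : 0 ≤ mh r * u r ^ 2 := mul_nonneg hmpos.le (sq_nonneg _)
        have h2 : 0 ≤ r ^ 3 * u r ^ 2 := mul_nonneg (by positivity) (sq_nonneg _)
        have h3 : 0 ≤ deriv mh r * r * u r ^ 2 :=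
          mul_nonneg (mul_nonneg hd0 hr0.le) (sq_nonneg _)
        nlinarith
      nlinarith [hfinal, hr2]
    -- φ is antitone on (rh, ∞)
    have hμcont : ContinuousOn μf (Set.Ioi rh) := by
      intro r hr
      exact ((hμf' r hr).differentiableAt.continuousAt).continuousWithinAt
    have hφcont : ContinuousOn φ (Set.Ioi rh) :=
      ((hC1u.continuousOn.pow 2).mul hμcont)
    have hanti : AntitoneOn φ (Set.Ioi rh) := by
      apply antitoneOn_of_deriv_nonpos (convex_Ioi rh) hφcont
      · rw [interior_Ioi]
        exact fun x hx => (hφder x hx).differentiableAt.differentiableWithinAt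
      · rw [interior_Ioi]
        intro x hx
        rw [(hφder x hx).deriv]
        exact hφ'le x hx
    -- φ tends to 0 at rh⁺
    have hμlim : Tendsto μf (𝓝[>] rh) (𝓝 0) := by
      have hml : Tendsto mh (𝓝[>] rh) (𝓝 (mh rh)) :=
        (hmC1.continuousOn.continuousWithinAt Set.self_mem_Ici).mono Set.Ioi_subset_Ici_self
      have h1 : Tendsto (fun r : ℝ => r ^ 2) (𝓝[>] rh) (𝓝 (rh ^ 2)) :=
        ((continuous_pow 2).tendsto rh).mono_left nhdsWithin_le_nhds
      have h2 : Tendsto (fun r : ℝ => 2 * mh r / r) (𝓝[>] rh) (𝓝 (2 * mh rh / rh)) := by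
        apply Tendsto.div ((tendsto_const_nhds).mul hml)
        · exact tendsto_id.mono_left nhdsWithin_le_nhds
        · exact hrh.ne'
      have := h1.sub h2
      have heq : rh ^ 2 - 2 * mh rh / rh = 0 := by
        rw [hhor]; field_simp; ring
      rwa [heq] at this
    have hulim : ∃ L : ℝ, Tendsto u (𝓝[>] rh) (𝓝 L) := by
      refine ⟨derivWithin (ω j) (Set.Ici rh) rh, ?_⟩
      have hg : ContinuousOn (derivWithin (ω j) (Set.Ici rh)) (Set.Ici rh) :=
        (hωC1 j hj).continuousOn_derivWithin (uniqueDiffOn_Ici rh) le_rfl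
      have hg' : Tendsto (derivWithin (ω j) (Set.Ici rh)) (𝓝[>] rh)
          (𝓝 (derivWithin (ω j) (Set.Ici rh) rh)) :=
        (hg.continuousWithinAt Set.self_mem_Ici).mono Set.Ioi_subset_Ici_self
      refine hg'.congr' ?_
      filter_upwards [self_mem_nhdsWithin] with a (ha : rh < a)
      exact derivWithin_of_mem_nhds (Ici_mem_nhds ha)
    obtain ⟨L, hL⟩ := hulim
    have hφlim : Tendsto φ (𝓝[>] rh) (𝓝 0) := by
      have := ((hL.pow 2).mul hμlim)
      simpa using this
    -- conclude u = 0 on (rh, ∞)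
    intro r hr
    have hev : ∀ᶠ x in 𝓝[>] rh, φ r ≤ φ x := by
      filter_upwards [Ioo_mem_nhdsGT_of_mem (Set.mem_Ico.mpr ⟨le_rfl, hr⟩)] with x hx
      exact hanti hx.1 hr hx.2.le
    have hφr : φ r ≤ 0 := ge_of_tendsto hφlim hev
    have hφnn : 0 ≤ φ r := mul_nonneg (sq_nonneg _) (hμ r hr).le
    have : u r ^ 2 * μf r = 0 := le_antisymm hφr hφnn
    have hu2 : u r ^ 2 = 0 := by
      rcases mul_eq_zero.mp this with h | h
      · exact h
      · exact absurd h (hμ r hr).ne'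
    exact pow_eq_zero_iff (by norm_num) |>.mp hu2
  -- each ω j is constant
  have hωconst : ∀ j ∈ Finset.Icc 1 (N - 1), ∀ r, rh ≤ r → ω j r = ω j rh := by
    intro j hj
    apply const_of_deriv_zero' (hωC1 j hj).continuousOn
    intro r hr
    have hdiff : DifferentiableAt ℝ (ω j) r :=
      (((hωC2 j hj).differentiableOn (by norm_num)).differentiableAt (Ioi_mem_nhds hr))
    have := hdiff.hasDerivAt
    rwa [huzero j hj r hr] at this
  -- m̂ is constant
  have hmconst : ∀ r, rh ≤ r → mh r = rh ^ 3 / 2 := by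
    intro r hr
    rw [← hhor]
    apply const_of_deriv_zero' hmC1.continuousOn _ r hr
    intro x hx
    have := heqm x hx
    have hsum : ∑ j ∈ Finset.Icc 1 (N - 1), deriv (ω j) x ^ 2 = 0 := by
      apply Finset.sum_eq_zero
      intro j hj
      rw [huzero j hj x hx]; ring
    rwa [hsum, mul_zero] at this
  intro r hr
  exact ⟨hmconst r hr, fun j hj => hωconst j hj r hr⟩
end
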